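/- Let s(a) := Σ_{i=1}^n c_i λ_i(|a|) for a ∈ Mₙ(ℂ), with c_i ≥ 0. If c_k < c_{k+1} for some k, then s is not 2-positive: there exist positive diagonal matrices a, b, c in Mₙ(ℂ) with [[a, c],[c, b]] ≥ 0 but s(a)s(b) < s(c)², so [[s(a), s(c)],[s(c), s(b)]] is not positive semidefinite. -/

import Mathlib

open Matrix BigOperators Finset
open scoped ComplexOrder

/-- The `i`-th largest eigenvalue (0-indexed) of a Hermitian matrix. -/
noncomputable def eigDesc {n : ℕ} (a : Matrix (Fin n) (Fin n) ℂ) (ha : a.IsHermitian) (i : Fin n) : ℝ :=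
  ha.eigenvalues (Tuple.sort ha.eigenvalues i.rev)

/-- Eigenvalues in decreasing order, extended by `0` beyond the size. `eigN a ha i = λ_{i+1}(a)`. -/
noncomputable def eigN {n : ℕ} (a : Matrix (Fin n) (Fin n) ℂ) (ha : a.IsHermitian) (i : ℕ) : ℝ :=
  if h : i < n then eigDesc a ha ⟨i, h⟩ else 0

/-- The non-linear trace of Choquet type:
`φ_α(a) = ∑_{i=1}^{n-1} (λ_i(a) - λ_{i+1}(a)) α(i) + λ_n(a) α(n)`. -/
noncomputable def choquetTrace {n : ℕ} (α : ℕ → ℝ) (a : Matrix (Fin n) (Fin n) ℂ)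
    (ha : a.IsHermitian) : ℝ :=
  ∑ i ∈ Finset.range n, (eigN a ha i - eigN a ha (i + 1)) * α (i + 1)

/-- Functional calculus of a Hermitian matrix `a` by a function `f : ℝ → ℝ` on its eigenvalues. -/
noncomputable def funCalc {n : ℕ} (f : ℝ → ℝ) (a : Matrix (Fin n) (Fin n) ℂ)
    (ha : a.IsHermitian) : Matrix (Fin n) (Fin n) ℂ :=
  (ha.eigenvectorUnitary : Matrix (Fin n) (Fin n) ℂ) *
    Matrix.diagonal (fun i => (f (ha.eigenvalues i) : ℂ)) *
    star (ha.eigenvectorUnitary : Matrix (Fin n) (Fin n) ℂ)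

/-- The absolute value `|a| = (a^* a)^{1/2}` of a matrix. -/
noncomputable def matAbs {n : ℕ} (a : Matrix (Fin n) (Fin n) ℂ) : Matrix (Fin n) (Fin n) ℂ :=
  ((Matrix.posSemidef_conjTranspose_mul_self a).1.eigenvectorUnitary : Matrix (Fin n) (Fin n) ℂ) *
    Matrix.diagonal (fun i => ((√((Matrix.posSemidef_conjTranspose_mul_self a).1.eigenvalues i) : ℝ) : ℂ)) *
    (star (Matrix.posSemidef_conjTranspose_mul_self a).1.eigenvectorUnitary : Matrix (Fin n) (Fin n) ℂ)

theorem matAbs_isHermitian {n : ℕ} (a : Matrix (Fin n) (Fin n) ℂ) : (matAbs a).IsHermitian := by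
  unfold matAbs
  simp [IsHermitian, Matrix.conjTranspose_mul, Matrix.star_eq_conjTranspose, Matrix.diagonal_conjTranspose, mul_assoc]
  rw [show ∀ f : Fin n → ℝ, (star fun i => (f i : ℂ)) = fun i => (f i : ℂ) from fun f => by ext; simp]


/-! ### Auxiliary lemmas -/

namespace Stmt13Aux

open Polynomial

lemma charpoly_diag' {m : ℕ} (d : Fin m → ℂ) :
    (Matrix.diagonal d).charpoly = ∏ i, (X - C (d i)) := by
  have h : charmatrix (Matrix.diagonal d) = Matrix.diagonal (fun i => (X : ℂ[X]) - C (d i)) := by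
    ext i j
    by_cases hij : i = j
    · subst hij; simp [charmatrix_apply_eq]
    · simp [charmatrix_apply_ne _ _ _ hij, Matrix.diagonal_apply_ne _ hij]
  rw [Matrix.charpoly, h, Matrix.det_diagonal]

lemma charpoly_herm {m : ℕ} (A : Matrix (Fin m) (Fin m) ℂ) (hA : A.IsHermitian) :
    A.charpoly = (Matrix.diagonal (fun i => (hA.eigenvalues i : ℂ))).charpoly := by
  set U : Matrix (Fin m) (Fin m) ℂ := (hA.eigenvectorUnitary : Matrix (Fin m) (Fin m) ℂ) with hU
  have hUU : U * star U = 1 := (Matrix.mem_unitaryGroup_iff).mp hA.eigenvectorUnitary.2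
  have hD : Matrix.diagonal ((fun i => (hA.eigenvalues i : ℂ))) =
      Matrix.diagonal (RCLike.ofReal ∘ hA.eigenvalues) := rfl
  rw [hD]
  set D := Matrix.diagonal (RCLike.ofReal ∘ hA.eigenvalues : Fin m → ℂ)
  have hspec : A = U * D * star U := hA.spectral_theorem
  have hcm : charmatrix A =
      (C : ℂ →+* ℂ[X]).mapMatrix U * charmatrix D * (C : ℂ →+* ℂ[X]).mapMatrix (star U) := by
    rw [charmatrix, charmatrix]
    rw [mul_sub, sub_mul]
    congr 1
    · have : (C : ℂ →+* ℂ[X]).mapMatrix U * Matrix.scalar (Fin m) (X : ℂ[X]) =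
          Matrix.scalar (Fin m) (X : ℂ[X]) * (C : ℂ →+* ℂ[X]).mapMatrix U :=
        (Matrix.scalar_commute _ (fun r' => Commute.all _ _) _).symm
      rw [this, mul_assoc, ← _root_.map_mul, hUU]
      simp
    · rw [← _root_.map_mul, ← _root_.map_mul, hspec]
  rw [Matrix.charpoly, Matrix.charpoly, hcm, Matrix.det_mul, Matrix.det_mul]
  rw [← RingHom.map_det, ← RingHom.map_det]
  rw [mul_comm, ← mul_assoc, ← _root_.map_mul, mul_comm ((star U).det), ← Matrix.det_mul, hUU]
  simp

lemma eig_multiset {m : ℕ} (f : Fin m → ℝ)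
    (hH : (Matrix.diagonal (fun i => (f i : ℂ))).IsHermitian) :
    (List.ofFn hH.eigenvalues : Multiset ℝ) = (List.ofFn f : Multiset ℝ) := by
  have h1 := charpoly_herm _ hH
  rw [charpoly_diag', charpoly_diag'] at h1
  have h2 : (Multiset.map (fun a => X - C a) (Multiset.map (fun i => (f i : ℂ)) Finset.univ.val)).prod
      = (Multiset.map (fun a => X - C a) (Multiset.map (fun i => (hH.eigenvalues i : ℂ)) Finset.univ.val)).prod := by
    simp only [Multiset.map_map, Function.comp]
    rw [← Finset.prod_eq_multiset_prod, ← Finset.prod_eq_multiset_prod] at *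
    exact h1
  have h3 := congrArg Polynomial.roots h2
  rw [Polynomial.roots_multiset_prod_X_sub_C, Polynomial.roots_multiset_prod_X_sub_C] at h3
  have h4 : Multiset.map (Complex.ofReal) (Multiset.map f Finset.univ.val) =
      Multiset.map (Complex.ofReal) (Multiset.map hH.eigenvalues Finset.univ.val) := by
    rw [Multiset.map_map, Multiset.map_map]; exact h3
  have h5 := Multiset.map_injective Complex.ofReal_injective h4
  rw [Fin.univ_val_map, Fin.univ_val_map] at h5
  exact h5.symm

lemma multiset_ofFn_comp_perm {α : Type*} {m : ℕ} (f : Fin m → α) (σ : Equiv.Perm (Fin m)) :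
    (List.ofFn (f ∘ σ) : Multiset α) = (List.ofFn f : Multiset α) := by
  rw [← Fin.univ_val_map, ← Fin.univ_val_map]
  have hσ : (Finset.univ.val.map (⇑σ) : Multiset (Fin m)) = Finset.univ.val := by
    calc Finset.univ.val.map ⇑σ = (Finset.univ.map σ.toEmbedding).val := rfl
    _ = Finset.univ.val := by rw [Finset.map_univ_equiv]
  calc Finset.univ.val.map (f ∘ ⇑σ) = (Finset.univ.val.map ⇑σ).map f := by
        rw [Multiset.map_map]
  _ = Finset.univ.val.map f := by rw [hσ]

lemma mono_eq_of_perm {m : ℕ} (u v : Fin m → ℝ) (hu : Monotone u) (hv : Monotone v)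
    (h : (List.ofFn u : Multiset ℝ) = (List.ofFn v : Multiset ℝ)) : u = v := by
  apply List.ofFn_injective
  exact (Multiset.coe_eq_coe.mp h).eq_of_sortedLE hu.sortedLE_ofFn hv.sortedLE_ofFn

lemma eigDesc_diag {m : ℕ} (f w : Fin m → ℝ) (hw : Antitone w)
    (hH : (Matrix.diagonal (fun i => (f i : ℂ))).IsHermitian)
    (hperm : (List.ofFn w : Multiset ℝ) = (List.ofFn f : Multiset ℝ)) (i : Fin m) :
    eigDesc _ hH i = w i := by
  have hmul := eig_multiset f hH
  set lam := hH.eigenvalues with hlam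
  have hmono : Monotone (lam ∘ Tuple.sort lam) := Tuple.monotone_sort lam
  have hvmono : Monotone (w ∘ Fin.rev) := fun a b hab => hw (by
    simpa [Fin.rev_le_rev] using hab)
  have hrev : (List.ofFn (w ∘ Fin.rev) : Multiset ℝ) = (List.ofFn w : Multiset ℝ) := by
    have := multiset_ofFn_comp_perm w (Fin.revPerm)
    exact this
  have hsortp : (List.ofFn (lam ∘ Tuple.sort lam) : Multiset ℝ) = (List.ofFn lam : Multiset ℝ) :=
    multiset_ofFn_comp_perm lam (Tuple.sort lam)
  have key : lam ∘ Tuple.sort lam = w ∘ Fin.rev := by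
    apply mono_eq_of_perm _ _ hmono hvmono
    rw [hsortp, hrev, hmul, hperm]
  have h0 : eigDesc _ hH i = (lam ∘ Tuple.sort lam) i.rev := rfl
  rw [h0, key]
  simp [Function.comp, Fin.rev_rev]

lemma matAbs_diag {m : ℕ} (f : Fin m → ℝ) (hf : ∀ i, 0 ≤ f i) :
    matAbs (Matrix.diagonal fun i => (f i : ℂ)) = Matrix.diagonal fun i => (f i : ℂ) := by
  have hpsd : (Matrix.diagonal fun i => (f i : ℂ)).PosSemidef :=
    Matrix.posSemidef_diagonal_iff.mpr fun i => by exact_mod_cast hf i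
  have e : matAbs (Matrix.diagonal fun i => (f i : ℂ)) =
      cfc Real.sqrt ((Matrix.diagonal fun i => (f i : ℂ))ᴴ * Matrix.diagonal fun i => (f i : ℂ)) := by
    rw [Matrix.IsHermitian.cfc_eq (Matrix.posSemidef_conjTranspose_mul_self _).1,
      Matrix.IsHermitian.cfc, Unitary.conjStarAlgAut_apply]
    rfl
  have hsa : IsSelfAdjoint (Matrix.diagonal fun i => (f i : ℂ)) := hpsd.1
  rw [e, hpsd.1, ← pow_two, ← cfc_comp_pow Real.sqrt 2 _ (ha := hsa) (hf := Real.continuous_sqrt.continuousOn)]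
  conv_rhs => rw [← cfc_id' ℝ (Matrix.diagonal fun i => (f i : ℂ))]
  refine cfc_congr fun x hx => ?_
  rw [hpsd.1.spectrum_real_eq_range_eigenvalues] at hx
  obtain ⟨i, rfl⟩ := hx
  exact Real.sqrt_sq (hpsd.eigenvalues_nonneg i)

lemma eigN_congr {m : ℕ} {a b : Matrix (Fin m) (Fin m) ℂ} (hab : a = b)
    (ha : a.IsHermitian) (hb : b.IsHermitian) (i : ℕ) :
    eigN a ha i = eigN b hb i := by subst hab; rfl

lemma sval {m : ℕ} (φ w : Fin m → ℝ) (hφ : ∀ i, 0 ≤ φ i) (hw : Antitone w)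
    (hperm : (List.ofFn w : Multiset ℝ) = (List.ofFn φ : Multiset ℝ)) (i : ℕ) (hi : i < m) :
    eigN (matAbs (Matrix.diagonal fun j => (φ j : ℂ)))
      (matAbs_isHermitian _) i = w ⟨i, hi⟩ := by
  have hd := matAbs_diag φ hφ
  have hH : (Matrix.diagonal fun j => (φ j : ℂ)).IsHermitian := hd ▸ matAbs_isHermitian _
  rw [eigN_congr hd _ hH i, eigN, dif_pos hi]
  exact eigDesc_diag φ w hw hH hperm ⟨i, hi⟩

lemma sum_top (nn k : ℕ) (c F : ℕ → ℝ) (hk : k + 2 ≤ nn) (hF0 : ∀ i, k + 2 ≤ i → F i = 0)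
    (hF1 : ∀ i, i ≤ k → F i = 1) :
    ∑ i ∈ range nn, c i * F i = (∑ i ∈ range (k+1), c i) + c (k+1) * F (k+1) := by
  rw [← Finset.sum_subset (Finset.range_subset_range.mpr hk)
    (fun i _ hi => by rw [hF0 i (by simpa using hi), mul_zero])]
  rw [Finset.sum_range_succ]
  congr 1
  · exact Finset.sum_congr rfl fun i hi => by
      rw [hF1 i (by simpa [Nat.lt_succ_iff] using hi), mul_one]

lemma sum_top' (nn k : ℕ) (c H : ℕ → ℝ) (hk : k + 2 ≤ nn) (hH0 : ∀ i, k + 2 ≤ i → H i = 0)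
    (hH1 : ∀ i, i < k → H i = 1) :
    ∑ i ∈ range nn, c i * H i = (∑ i ∈ range k, c i) + c k * H k + c (k+1) * H (k+1) := by
  rw [← Finset.sum_subset (Finset.range_subset_range.mpr hk)
    (fun i _ hi => by rw [hH0 i (by simpa using hi), mul_zero])]
  rw [Finset.sum_range_succ, Finset.sum_range_succ]
  congr 2
  · exact Finset.sum_congr rfl fun i hi => by
      rw [hH1 i (by simpa using hi), mul_one]

lemma blockPSD {m : ℕ} (p q : Fin m → ℝ) :
    (Matrix.fromBlocks
      (Matrix.diagonal fun i => ((p i * p i : ℝ) : ℂ))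
      (Matrix.diagonal fun i => ((p i * q i : ℝ) : ℂ))
      (Matrix.diagonal fun i => ((p i * q i : ℝ) : ℂ))
      (Matrix.diagonal fun i => ((q i * q i : ℝ) : ℂ))).PosSemidef := by
  have key : (Matrix.fromBlocks
      (Matrix.diagonal fun i => ((p i * p i : ℝ) : ℂ))
      (Matrix.diagonal fun i => ((p i * q i : ℝ) : ℂ))
      (Matrix.diagonal fun i => ((p i * q i : ℝ) : ℂ))
      (Matrix.diagonal fun i => ((q i * q i : ℝ) : ℂ)))
      = (Matrix.fromCols (Matrix.diagonal fun i => ((p i:ℝ):ℂ))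
          (Matrix.diagonal fun i => ((q i:ℝ):ℂ)))ᴴ *
        (Matrix.fromCols (Matrix.diagonal fun i => ((p i:ℝ):ℂ))
          (Matrix.diagonal fun i => ((q i:ℝ):ℂ))) := by
    have hct : ∀ (d : Fin m → ℝ),
        (Matrix.diagonal fun i => ((d i : ℝ) : ℂ))ᴴ = Matrix.diagonal fun i => ((d i : ℝ):ℂ) := by
      intro d
      ext i j
      simp only [Matrix.conjTranspose_apply, Matrix.diagonal_apply]
      split_ifs with h1 h2 h3 <;> simp_all [eq_comm, Complex.conj_ofReal]
    rw [Matrix.conjTranspose_fromCols_eq_fromRows_conjTranspose,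
      Matrix.fromRows_mul_fromCols, hct, hct,
      Matrix.diagonal_mul_diagonal, Matrix.diagonal_mul_diagonal,
      Matrix.diagonal_mul_diagonal, Matrix.diagonal_mul_diagonal]
    ext i j
    rcases i with i|i <;> rcases j with j|j <;>
      simp only [Matrix.fromBlocks_apply₁₁, Matrix.fromBlocks_apply₁₂,
        Matrix.fromBlocks_apply₂₁, Matrix.fromBlocks_apply₂₂, Matrix.diagonal_apply] <;>
      split_ifs <;> push_cast <;> ring
  rw [key]
  exact Matrix.posSemidef_conjTranspose_mul_self _

lemma nonpsd2 (sA sC : ℝ) (h0 : 0 < sA) (hlt : sA * sA < sC^2) :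
    ¬ (!![(sA : ℂ), (sC : ℂ); (sC : ℂ), (sA : ℂ)] : Matrix (Fin 2) (Fin 2) ℂ).PosSemidef := by
  intro hP
  have hq := hP.dotProduct_mulVec_nonneg ![(sC : ℂ), (-sA : ℂ)]
  simp only [dotProduct, Matrix.mulVec, Fin.sum_univ_two, Pi.star_apply,
    Matrix.cons_val_zero, Matrix.cons_val_one, Matrix.head_cons,
    Matrix.cons_val', Matrix.head_fin_const, Matrix.empty_val',
    Matrix.cons_val_fin_one] at hq
  have e00 : (!![(sA : ℂ), (sC : ℂ); (sC : ℂ), (sA : ℂ)]) 0 0 = (sA:ℂ) := rfl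
  have e01 : (!![(sA : ℂ), (sC : ℂ); (sC : ℂ), (sA : ℂ)]) 0 1 = (sC:ℂ) := rfl
  have e10 : (!![(sA : ℂ), (sC : ℂ); (sC : ℂ), (sA : ℂ)]) 1 0 = (sC:ℂ) := rfl
  have e11 : (!![(sA : ℂ), (sC : ℂ); (sC : ℂ), (sA : ℂ)]) 1 1 = (sA:ℂ) := rfl
  rw [e00, e01, e10, e11] at hq
  have hre : (star (sC:ℂ) * ((sA:ℂ) * (sC:ℂ) + (sC:ℂ) * -(sA:ℂ)) +
      star (-(sA:ℂ)) * ((sC:ℂ) * (sC:ℂ) + (sA:ℂ) * -(sA:ℂ))) =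
      (((sA*sA*sA - sA*(sC*sC)) : ℝ) : ℂ) := by
    rw [show star (sC:ℂ) = (sC:ℂ) by simp [Complex.star_def, Complex.conj_ofReal],
      show star (-(sA:ℂ)) = -(sA:ℂ) by simp [Complex.star_def, Complex.conj_ofReal]]
    push_cast
    ring
  rw [hre, Complex.zero_le_real] at hq
  nlinarith

/-- the three step functions -/
def Ffun (k : ℕ) (t : ℝ) : ℕ → ℝ := fun i => if i ≤ k then 1 else if i = k+1 then t else 0
def Gfun (k : ℕ) (t : ℝ) : ℕ → ℝ := fun i =>
  if i < k then 1 else if i = k then t else if i = k+1 then 1 else 0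
def Hfun (k : ℕ) (u : ℝ) : ℕ → ℝ := fun i => if i < k then 1 else if i ≤ k+1 then u else 0

variable {k : ℕ} {t u : ℝ}

lemma Ffun_nonneg (ht : 0 ≤ t) : ∀ i, 0 ≤ Ffun k t i := by
  intro i; unfold Ffun; split_ifs <;> norm_num <;> linarith

lemma Gfun_nonneg (ht : 0 ≤ t) : ∀ i, 0 ≤ Gfun k t i := by
  intro i; unfold Gfun; split_ifs <;> norm_num <;> linarith

lemma Hfun_nonneg (hu : 0 ≤ u) : ∀ i, 0 ≤ Hfun k u i := by
  intro i; unfold Hfun; split_ifs <;> norm_num <;> linarith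

lemma Ffun_anti (ht0 : 0 ≤ t) (ht1 : t ≤ 1) : Antitone (Ffun k t) := by
  intro a b hab; unfold Ffun
  split_ifs <;> first | (exfalso; omega) | linarith

lemma Hfun_anti (hu0 : 0 ≤ u) (hu1 : u ≤ 1) : Antitone (Hfun k u) := by
  intro a b hab; unfold Hfun
  split_ifs <;> first | (exfalso; omega) | linarith

lemma Ffun_zero_top : ∀ i, k + 2 ≤ i → Ffun k t i = 0 := by
  intro i hi; unfold Ffun; split_ifs <;> first | (exfalso; omega) | rfl

lemma Gfun_zero_top : ∀ i, k + 2 ≤ i → Gfun k t i = 0 := by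
  intro i hi; unfold Gfun; split_ifs <;> first | (exfalso; omega) | rfl

lemma Hfun_zero_top : ∀ i, k + 2 ≤ i → Hfun k u i = 0 := by
  intro i hi; unfold Hfun; split_ifs <;> first | (exfalso; omega) | rfl

lemma Ffun_one : ∀ i, i ≤ k → Ffun k t i = 1 := by
  intro i hi; unfold Ffun; split_ifs <;> first | (exfalso; omega) | rfl

lemma Hfun_one : ∀ i, i < k → Hfun k u i = 1 := by
  intro i hi; unfold Hfun; split_ifs <;> first | (exfalso; omega) | rfl

lemma Ffun_kp1 : Ffun k t (k+1) = t := by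
  unfold Ffun; split_ifs <;> first | (exfalso; omega) | rfl

lemma Hfun_k : Hfun k u k = u := by
  unfold Hfun; split_ifs <;> first | (exfalso; omega) | rfl

lemma Hfun_kp1 : Hfun k u (k+1) = u := by
  unfold Hfun; split_ifs <;> first | (exfalso; omega) | rfl

lemma Ffun_sq (i : ℕ) : Ffun k u i * Ffun k u i = Ffun k (u*u) i := by
  unfold Ffun; split_ifs <;> ring

lemma Gfun_sq (i : ℕ) : Gfun k u i * Gfun k u i = Gfun k (u*u) i := by
  unfold Gfun; split_ifs <;> ring

lemma FGfun_mul (i : ℕ) : Ffun k u i * Gfun k u i = Hfun k u i := by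
  unfold Ffun Gfun Hfun; split_ifs <;> first | (exfalso; omega) | ring

lemma Gfun_perm {m : ℕ} (hk : k + 1 < m) :
    (fun i : Fin m => Gfun k t i.val) =
      (fun i : Fin m => Ffun k t i.val) ∘
        (Equiv.swap (⟨k, by omega⟩ : Fin m) ⟨k+1, hk⟩) := by
  funext i
  set a : Fin m := ⟨k, by omega⟩
  set b : Fin m := ⟨k+1, hk⟩
  by_cases hia : i = a
  · subst hia
    simp only [Function.comp_apply, Equiv.swap_apply_left]
    show Gfun k t k = Ffun k t (k+1)
    unfold Ffun Gfun; split_ifs <;> first | (exfalso; omega) | rfl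
  by_cases hib : i = b
  · subst hib
    simp only [Function.comp_apply, Equiv.swap_apply_right]
    show Gfun k t (k+1) = Ffun k t k
    unfold Ffun Gfun; split_ifs <;> first | (exfalso; omega) | rfl
  · simp only [Function.comp_apply, Equiv.swap_apply_of_ne_of_ne hia hib]
    have h1 : i.val ≠ k := fun h => hia (Fin.ext h)
    have h2 : i.val ≠ k+1 := fun h => hib (Fin.ext h)
    unfold Ffun Gfun; split_ifs <;> first | (exfalso; omega) | rfl

end Stmt13Aux


open Stmt13Aux in
/-- if `c_k < c_{k+1}` for some `k`, then `s(a) = ∑ c_i λ_i(|a|)`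
is not 2-positive (here `c` is 0-indexed: `c i` is the coefficient of `λ_{i+1}`). -/
theorem stmt13 (n : ℕ) (c : ℕ → ℝ) (hnn : ∀ i : ℕ, 0 ≤ c i)
    (k : ℕ) (hk : k + 1 < n) (hck : c k < c (k + 1))
    (s : Matrix (Fin n) (Fin n) ℂ → ℝ)
    (hs : ∀ a, s a = ∑ i ∈ Finset.range n, c i * eigN (matAbs a) (matAbs_isHermitian a) i) :
    ∃ A B C : Matrix (Fin n) (Fin n) ℂ,
      (∃ f : Fin n → ℝ, (∀ i, 0 ≤ f i) ∧ A = Matrix.diagonal fun i => (f i : ℂ)) ∧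
      (∃ g : Fin n → ℝ, (∀ i, 0 ≤ g i) ∧ B = Matrix.diagonal fun i => (g i : ℂ)) ∧
      (∃ h : Fin n → ℝ, (∀ i, 0 ≤ h i) ∧ C = Matrix.diagonal fun i => (h i : ℂ)) ∧
      (Matrix.fromBlocks A C C B).PosSemidef ∧
      s A * s B < s C ^ 2 ∧
      ¬ (!![(s A : ℂ), (s C : ℂ); (s C : ℂ), (s B : ℂ)] : Matrix (Fin 2) (Fin 2) ℂ).PosSemidef := by
  classical
  open Stmt13Aux in
  -- numeric setup
  set q : ℝ := c (k+1) with hqdef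
  have hq : 0 < q := lt_of_le_of_lt (hnn k) hck
  set u : ℝ := (c k / q + 1) / 2 with hudef
  have hr0 : 0 ≤ c k / q := div_nonneg (hnn k) hq.le
  have hr1 : c k / q < 1 := (div_lt_one hq).mpr hck
  have hu0 : 0 < u := by rw [hudef]; linarith
  have hu1 : u < 1 := by rw [hudef]; linarith
  have hru : c k / q < u := by rw [hudef]; linarith
  have hcku : c k < q * u := by
    have := (div_lt_iff₀ hq).mp hru
    linarith
  set t : ℝ := u * u with htdef
  have ht0 : 0 ≤ t := by nlinarith
  have ht1 : t ≤ 1 := by nlinarith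
  -- the matrices
  set A : Matrix (Fin n) (Fin n) ℂ :=
    Matrix.diagonal (fun i : Fin n => ((Ffun k t i.val : ℝ) : ℂ)) with hAdef
  set B : Matrix (Fin n) (Fin n) ℂ :=
    Matrix.diagonal (fun i : Fin n => ((Gfun k t i.val : ℝ) : ℂ)) with hBdef
  set C : Matrix (Fin n) (Fin n) ℂ :=
    Matrix.diagonal (fun i : Fin n => ((Hfun k u i.val : ℝ) : ℂ)) with hCdef
  have hFnn : ∀ i : Fin n, 0 ≤ Ffun k t i.val := fun i => Ffun_nonneg ht0 i.val
  have hGnn : ∀ i : Fin n, 0 ≤ Gfun k t i.val := fun i => Gfun_nonneg ht0 i.val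
  have hHnn : ∀ i : Fin n, 0 ≤ Hfun k u i.val := fun i => Hfun_nonneg hu0.le i.val
  have hFanti : Antitone (fun i : Fin n => Ffun k t i.val) :=
    fun a b hab => Ffun_anti ht0 ht1 (by exact_mod_cast hab)
  have hHanti : Antitone (fun i : Fin n => Hfun k u i.val) :=
    fun a b hab => Hfun_anti hu0.le hu1.le (by exact_mod_cast hab)
  -- values of s
  have hsA : s A = ∑ i ∈ Finset.range n, c i * Ffun k t i := by
    rw [hs]
    refine Finset.sum_congr rfl fun i hi => ?_
    have hi' : i < n := Finset.mem_range.mp hi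
    rw [sval (fun j : Fin n => Ffun k t j.val) (fun j : Fin n => Ffun k t j.val)
      hFnn hFanti rfl i hi']
  have hsB : s B = ∑ i ∈ Finset.range n, c i * Ffun k t i := by
    rw [hs]
    refine Finset.sum_congr rfl fun i hi => ?_
    have hi' : i < n := Finset.mem_range.mp hi
    have hperm : (List.ofFn (fun j : Fin n => Ffun k t j.val) : Multiset ℝ)
        = (List.ofFn (fun j : Fin n => Gfun k t j.val) : Multiset ℝ) := by
      rw [Gfun_perm hk]
      exact (multiset_ofFn_comp_perm _ _).symm
    rw [sval (fun j : Fin n => Gfun k t j.val) (fun j : Fin n => Ffun k t j.val)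
      hGnn hFanti hperm i hi']
  have hsC : s C = ∑ i ∈ Finset.range n, c i * Hfun k u i := by
    rw [hs]
    refine Finset.sum_congr rfl fun i hi => ?_
    have hi' : i < n := Finset.mem_range.mp hi
    rw [sval (fun j : Fin n => Hfun k u j.val) (fun j : Fin n => Hfun k u j.val)
      hHnn hHanti rfl i hi']
  have hkn : k + 2 ≤ n := hk
  have hsAval : s A = (∑ i ∈ Finset.range k, c i) + c k + q * t := by
    rw [hsA, sum_top n k c (Ffun k t) hkn Ffun_zero_top Ffun_one, Ffun_kp1,
      Finset.sum_range_succ]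
  have hsBval : s B = (∑ i ∈ Finset.range k, c i) + c k + q * t := by
    rw [hsB, sum_top n k c (Ffun k t) hkn Ffun_zero_top Ffun_one, Ffun_kp1,
      Finset.sum_range_succ]
  have hsCval : s C = (∑ i ∈ Finset.range k, c i) + c k * u + q * u := by
    rw [hsC, sum_top' n k c (Hfun k u) hkn Hfun_zero_top Hfun_one, Hfun_k, Hfun_kp1]
  have hS0 : 0 ≤ ∑ i ∈ Finset.range k, c i := Finset.sum_nonneg fun i _ => hnn i
  have htpos : 0 < t := by rw [htdef]; nlinarith
  have hApos : 0 < s A := by rw [hsAval]; nlinarith [mul_pos hq htpos, hnn k, hS0]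
  have hAC : s A < s C := by
    rw [hsAval, hsCval]
    nlinarith [mul_pos (by linarith : (0:ℝ) < 1 - u) (by linarith : 0 < q * u - c k)]
  have hBA : s B = s A := by rw [hsAval, hsBval]
  refine ⟨A, B, C,
    ⟨fun i : Fin n => Ffun k t i.val, hFnn, rfl⟩,
    ⟨fun i : Fin n => Gfun k t i.val, hGnn, rfl⟩,
    ⟨fun i : Fin n => Hfun k u i.val, hHnn, rfl⟩, ?_, ?_, ?_⟩
  · -- PSD
    have h1 : A = Matrix.diagonal fun i : Fin n =>
        ((Ffun k u i.val * Ffun k u i.val : ℝ) : ℂ) := by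
      rw [hAdef]; exact congrArg Matrix.diagonal (funext fun i => by rw [Ffun_sq, ← htdef])
    have h2 : B = Matrix.diagonal fun i : Fin n =>
        ((Gfun k u i.val * Gfun k u i.val : ℝ) : ℂ) := by
      rw [hBdef]; exact congrArg Matrix.diagonal (funext fun i => by rw [Gfun_sq, ← htdef])
    have h3 : C = Matrix.diagonal fun i : Fin n =>
        ((Ffun k u i.val * Gfun k u i.val : ℝ) : ℂ) := by
      rw [hCdef]; exact congrArg Matrix.diagonal (funext fun i => by rw [FGfun_mul])
    rw [h1, h2, h3]
    exact blockPSD (fun i : Fin n => Ffun k u i.val) (fun i : Fin n => Gfun k u i.val)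
  · -- inequality
    rw [hBA, sq]
    exact mul_self_lt_mul_self hApos.le hAC
  · -- non PSD
    rw [hBA]
    exact nonpsd2 (s A) (s C) hApos (by rw [sq] at *; exact mul_self_lt_mul_self hApos.le hAC)
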